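/- Let K be a nonempty subset of a metric space (X,d) and let T, f, g : K → K be three self-maps such that the closure of T(K) is contained in f(K) ∩ g(K). Suppose there is an upper semicontinuous function φ : [0,∞) → [0,∞) with φ(t) < t for all t > 0 such that for all x, y ∈ K, d(Tx,Ty) ≤ φ( min{ max{ d(fx,gy), d(Tx,fx), d(Ty,gy), (1/2)[d(Tx,gy) + d(Ty,fx)] }, max{ d(fy,gx), d(Tx,gx), d(Ty,fy), (1/2)[d(Tx,fy) + d(Ty,gx)] } } ). If at least one of the sets closure(T(K)), f(K), g(K) is a complete metric subspace, and both pairs (T,f) and (T,g) are weakly compatible, then F(T) ∩ F(f) ∩ F(g) is a singleton. -/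
import Mathlib

open Filter Topology

private lemma aux_usc {φ : ℝ → ℝ}
    (hφusc : UpperSemicontinuousOn φ (Set.Ici 0))
    (hφlt : ∀ t > (0:ℝ), φ t < t) {c : ℝ} (hc : 0 ≤ c)
    {t d : ℕ → ℝ} (ht0 : ∀ n, 0 ≤ t n)
    (htc : Tendsto t atTop (𝓝 c)) (hdc : Tendsto d atTop (𝓝 c))
    (hdt : ∀ n, d n ≤ min (φ (t n)) (t n)) : c ≤ 0 := by
  by_contra h
  push_neg at h
  have hφc : φ c < c := hφlt c h
  set y₀ := (φ c + c)/2 with hy₀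
  have h1 : φ c < y₀ := by rw [hy₀]; linarith
  have h2 : y₀ < c := by rw [hy₀]; linarith
  have htc' : Tendsto t atTop (𝓝[Set.Ici 0] c) :=
    tendsto_nhdsWithin_of_tendsto_nhds_of_eventually_within _ htc
      (Filter.Eventually.of_forall fun n => Set.mem_Ici.2 (ht0 n))
  have h3 : ∀ᶠ n in atTop, φ (t n) < y₀ :=
    htc'.eventually (hφusc c (Set.mem_Ici.2 hc) y₀ h1)
  have h4 : ∀ᶠ n in atTop, y₀ < d n := hdc.eventually (eventually_gt_nhds h2)
  obtain ⟨n, hn3, hn4⟩ := (h3.and h4).exists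
  have h5 := (hdt n).trans (min_le_left _ _)
  linarith

private lemma aux_squeeze {φ : ℝ → ℝ}
    (hφusc : UpperSemicontinuousOn φ (Set.Ici 0))
    (hφlt : ∀ t > (0:ℝ), φ t < t) {c : ℝ} (hc : 0 ≤ c)
    {t d M : ℕ → ℝ} (ht0 : ∀ n, 0 ≤ t n)
    (hdt : ∀ n, d n ≤ min (φ (t n)) (t n))
    (htM : ∀ n, t n ≤ M n)
    (hM : Tendsto M atTop (𝓝 c)) (hd : Tendsto d atTop (𝓝 c)) : c ≤ 0 := by
  have hdtn : ∀ n, d n ≤ t n := fun n => (hdt n).trans (min_le_right _ _)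
  have htc : Tendsto t atTop (𝓝 c) :=
    tendsto_of_tendsto_of_tendsto_of_le_of_le hd hM hdtn htM
  exact aux_usc hφusc hφlt hc ht0 htc hd hdt

private lemma aux_hps {φ : ℝ → ℝ}
    (hφlt : ∀ t > (0:ℝ), φ t < t)
    {t e : ℝ} (ht0 : 0 ≤ t) (he : e ≤ min (φ t) t) (hte : t ≤ e) : e ≤ 0 := by
  rcases ht0.lt_or_eq with h | h
  · have h1 := hφlt t h
    have h2 : e ≤ φ t := he.trans (min_le_left _ _)
    linarith
  · have h2 : e ≤ t := he.trans (min_le_right _ _)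
    linarith

private lemma aux_D0 {φ : ℝ → ℝ}
    (hφusc : UpperSemicontinuousOn φ (Set.Ici 0))
    (hφlt : ∀ t > (0:ℝ), φ t < t)
    {D : ℕ → ℝ} (hD : ∀ n, 0 ≤ D n)
    (hstep : ∀ n, ∃ t, 0 ≤ t ∧ D (n+1) ≤ min (φ t) t ∧ t ≤ max (D n) (D (n+1))) :
    Tendsto D atTop (𝓝 0) := by
  have hanti : ∀ n, D (n+1) ≤ D n := by
    intro n
    by_contra hlt
    push_neg at hlt
    obtain ⟨t, ht0, hle, hmax⟩ := hstep n
    have h1 : t ≤ D (n+1) := hmax.trans_eq (max_eq_right hlt.le)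
    have h2 := aux_hps hφlt ht0 hle h1
    linarith [hD n]
  choose ts hts0 hts1 hts2 using hstep
  have hanti' : Antitone D := antitone_nat_of_succ_le hanti
  have hbdd : BddBelow (Set.range D) := ⟨0, by rintro _ ⟨n, rfl⟩; exact hD n⟩
  have hDc : Tendsto D atTop (𝓝 (⨅ n, D n)) := tendsto_atTop_ciInf hanti' hbdd
  set c := ⨅ n, D n with hcdef
  have hc0 : 0 ≤ c := le_ciInf hD
  have hd1 : Tendsto (fun n => D (n+1)) atTop (𝓝 c) :=
    hDc.comp (tendsto_add_atTop_nat 1)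
  have hMle : ∀ n, ts n ≤ D n := fun n => (hts2 n).trans_eq (max_eq_left (hanti n))
  have hcle : c ≤ 0 := aux_squeeze hφusc hφlt hc0 hts0 hts1 hMle hDc hd1
  have hce : c = 0 := le_antisymm hcle hc0
  rwa [hce] at hDc

private lemma aux_cauchy {X : Type*} [MetricSpace X] {φ : ℝ → ℝ}
    (hφusc : UpperSemicontinuousOn φ (Set.Ici 0))
    (hφlt : ∀ t > (0:ℝ), φ t < t)
    {y : ℕ → X}
    (hD0 : Tendsto (fun n => dist (y n) (y (n+1))) atTop (𝓝 0))
    (hkey : ∀ k j, ∃ t, 0 ≤ t ∧ dist (y (2*k+2)) (y (2*j+1)) ≤ min (φ t) t ∧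
      t ≤ max (max (dist (y (2*k+1)) (y (2*j))) (dist (y (2*k+2)) (y (2*k+1))))
            (max (dist (y (2*j+1)) (y (2*j)))
              ((dist (y (2*k+2)) (y (2*j)) + dist (y (2*j+1)) (y (2*k+1)))/2))) :
    CauchySeq y := by
  classical
  set D : ℕ → ℝ := fun n => dist (y n) (y (n+1)) with hDdef
  have hDnon : ∀ n, 0 ≤ D n := fun n => dist_nonneg
  have hDσ : ∀ σ : ℕ → ℕ, (∀ k, k ≤ σ k) → Tendsto (fun k => D (σ k)) atTop (𝓝 0) :=
    fun σ hσ => hD0.comp (tendsto_atTop_mono hσ tendsto_id)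
  by_contra hnc
  rw [Metric.cauchySeq_iff] at hnc
  push_neg at hnc
  obtain ⟨ε, hε, hpair⟩ := hnc
  have hsel : ∀ k : ℕ, ∃ m n : ℕ, k+1 ≤ n ∧ n < m ∧ ε ≤ dist (y m) (y n) ∧
      dist (y m) (y n) ≤ ε + D (m-1) := by
    intro k
    obtain ⟨a, ha, b, hb, hab⟩ := hpair (k+1)
    have hne : a ≠ b := by
      rintro rfl; rw [dist_self] at hab; linarith
    have hdb : ε ≤ dist (y (max a b)) (y (min a b)) := by
      have : dist (y (max a b)) (y (min a b)) = dist (y a) (y b) := by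
        rcases le_total a b with h | h
        · rw [min_eq_left h, max_eq_right h, dist_comm]
        · rw [min_eq_right h, max_eq_left h]
      rw [this]; exact hab
    have hex : ∃ m, min a b < m ∧ ε ≤ dist (y m) (y (min a b)) :=
      ⟨max a b, min_lt_max.2 hne, hdb⟩
    set n0 := min a b with hn0def
    set m0 := Nat.find hex with hm0def
    obtain ⟨hm1, hm2⟩ : n0 < m0 ∧ ε ≤ dist (y m0) (y n0) := Nat.find_spec hex
    refine ⟨m0, n0, le_min ha hb, hm1, hm2, ?_⟩
    have hprev : dist (y (m0 - 1)) (y n0) < ε := by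
      rcases Nat.lt_or_ge n0 (m0 - 1) with h | h
      · by_contra hge
        push_neg at hge
        exact Nat.find_min hex (by omega) ⟨h, hge⟩
      · have he : m0 - 1 = n0 := by omega
        rw [he, dist_self]; exact hε
    have hstep : m0 - 1 + 1 = m0 := by omega
    have htri : dist (y m0) (y n0) ≤ dist (y m0) (y (m0-1)) + dist (y (m0-1)) (y n0) :=
      dist_triangle _ _ _
    have hDm : dist (y m0) (y (m0-1)) = D (m0-1) := by
      rw [hDdef]; simp only []; rw [hstep, dist_comm]
    linarith [htri, hDm]
  choose ms ns hn1 hn2 hn3 hn4 using hsel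
  set p : ℕ → ℕ := fun k => if ms k % 2 = 0 then ms k else ms k + 1 with hpdef
  set q : ℕ → ℕ := fun k => if ns k % 2 = 1 then ns k else ns k + 1 with hqdef
  have hpfacts : ∀ k, ms k ≤ p k ∧ p k ≤ ms k + 1 ∧ p k % 2 = 0 ∧
      dist (y (ms k)) (y (p k)) ≤ D (ms k) := by
    intro k
    by_cases h : ms k % 2 = 0
    · have hp : p k = ms k := by simp [hpdef, h]
      rw [hp]
      exact ⟨le_rfl, by omega, by omega, by rw [dist_self]; exact hDnon _⟩
    · have hp : p k = ms k + 1 := by simp [hpdef, h]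
      rw [hp]
      exact ⟨by omega, le_rfl, by omega, le_rfl⟩
  have hqfacts : ∀ k, ns k ≤ q k ∧ q k ≤ ns k + 1 ∧ q k % 2 = 1 ∧
      dist (y (ns k)) (y (q k)) ≤ D (ns k) := by
    intro k
    by_cases h : ns k % 2 = 1
    · have hq : q k = ns k := by simp [hqdef, h]
      rw [hq]
      exact ⟨le_rfl, by omega, by omega, by rw [dist_self]; exact hDnon _⟩
    · have hq : q k = ns k + 1 := by simp [hqdef, h]
      rw [hq]
      exact ⟨by omega, le_rfl, by omega, le_rfl⟩
  have hAB : ∀ k, ∃ A B : ℕ, p k = 2*A+2 ∧ q k = 2*B+1 := by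
    intro k
    obtain ⟨h1, h2, h3, -⟩ := hpfacts k
    obtain ⟨h1', h2', h3', -⟩ := hqfacts k
    have hm : k + 1 ≤ ns k := hn1 k
    have hmn : ns k < ms k := hn2 k
    exact ⟨p k / 2 - 1, q k / 2, by omega, by omega⟩
  choose A B hA hB using hAB
  have hdk : Tendsto (fun k => dist (y (ms k)) (y (ns k))) atTop (𝓝 ε) := by
    have hup : Tendsto (fun k => ε + D (ms k - 1)) atTop (𝓝 ε) := by
      have := (hDσ (fun k => ms k - 1) (fun k => by
        show k ≤ ms k - 1
        have := hn1 k; have := hn2 k; omega))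
      simpa using tendsto_const_nhds.add this
    exact tendsto_of_tendsto_of_tendsto_of_le_of_le tendsto_const_nhds hup hn3 hn4
  set e : ℕ → ℝ := fun k => dist (y (p k)) (y (q k)) with hedef
  have hDp : Tendsto (fun k => D (ms k)) atTop (𝓝 0) :=
    hDσ ms (fun k => by have := hn1 k; have := hn2 k; omega)
  have hDq : Tendsto (fun k => D (ns k)) atTop (𝓝 0) :=
    hDσ ns (fun k => by have := hn1 k; omega)
  have helow : ∀ k, dist (y (ms k)) (y (ns k)) - D (ms k) - D (ns k) ≤ e k := by
    intro k
    have t1 : dist (y (ms k)) (y (ns k)) ≤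
        dist (y (ms k)) (y (p k)) + dist (y (p k)) (y (q k)) + dist (y (q k)) (y (ns k)) :=
      dist_triangle4 _ _ _ _
    have t2 := (hpfacts k).2.2.2
    have t3 := (hqfacts k).2.2.2
    rw [dist_comm (y (q k))] at t1
    simp only [hedef]
    linarith
  have hehigh : ∀ k, e k ≤ dist (y (ms k)) (y (ns k)) + D (ms k) + D (ns k) := by
    intro k
    have t1 : dist (y (p k)) (y (q k)) ≤
        dist (y (p k)) (y (ms k)) + dist (y (ms k)) (y (ns k)) + dist (y (ns k)) (y (q k)) :=
      dist_triangle4 _ _ _ _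
    have t2 := (hpfacts k).2.2.2
    have t3 := (hqfacts k).2.2.2
    rw [dist_comm (y (p k)) (y (ms k))] at t1
    simp only [hedef]
    linarith
  have he : Tendsto e atTop (𝓝 ε) := by
    have hlow : Tendsto (fun k => dist (y (ms k)) (y (ns k)) - D (ms k) - D (ns k)) atTop (𝓝 ε) := by
      have := (hdk.sub hDp).sub hDq
      simpa using this
    have hhigh : Tendsto (fun k => dist (y (ms k)) (y (ns k)) + D (ms k) + D (ns k)) atTop (𝓝 ε) := by
      have := (hdk.add hDp).add hDq
      simpa using this
    exact tendsto_of_tendsto_of_tendsto_of_le_of_le hlow hhigh helow hehigh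
  have hkk := fun k => hkey (A k) (B k)
  choose ts ht0 ht1 ht2 using hkk
  have ht1' : ∀ k, e k ≤ min (φ (ts k)) (ts k) := by
    intro k
    have := ht1 k
    rwa [← hA k, ← hB k] at this
  have hDa : Tendsto (fun k => D (2*A k+1)) atTop (𝓝 0) := by
    refine hDσ (fun k => 2*A k+1) (fun k => ?_)
    show k ≤ 2*A k+1
    have h1 := (hpfacts k).1
    have h2 := hA k
    have := hn1 k; have := hn2 k
    omega
  have hDb : Tendsto (fun k => D (2*B k)) atTop (𝓝 0) := by
    refine hDσ (fun k => 2*B k) (fun k => ?_)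
    show k ≤ 2*B k
    have h1 := (hqfacts k).1
    have h2 := hB k
    have := hn1 k
    omega
  have ht2' : ∀ k, ts k ≤ e k + D (2*A k+1) + D (2*B k) := by
    intro k
    refine (ht2 k).trans ?_
    have hek : dist (y (2*A k+2)) (y (2*B k+1)) = e k := by rw [← hA k, ← hB k]
    have hDa' : dist (y (2*A k+2)) (y (2*A k+1)) = D (2*A k+1) := by
      rw [hDdef]; simp only []; rw [dist_comm]
    have hDb' : dist (y (2*B k+1)) (y (2*B k)) = D (2*B k) := by
      rw [hDdef]; simp only []; rw [dist_comm]
    have hc1 : dist (y (2*A k+1)) (y (2*B k)) ≤ D (2*A k+1) + e k + D (2*B k) := by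
      have t1 : dist (y (2*A k+1)) (y (2*B k)) ≤
          dist (y (2*A k+1)) (y (2*A k+2)) + dist (y (2*A k+2)) (y (2*B k+1)) +
            dist (y (2*B k+1)) (y (2*B k)) := dist_triangle4 _ _ _ _
      rw [hek, hDb', dist_comm (y (2*A k+1)) (y (2*A k+2)), hDa'] at t1
      linarith
    have hc4a : dist (y (2*A k+2)) (y (2*B k)) ≤ e k + D (2*B k) := by
      have t1 : dist (y (2*A k+2)) (y (2*B k)) ≤
          dist (y (2*A k+2)) (y (2*B k+1)) + dist (y (2*B k+1)) (y (2*B k)) :=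
        dist_triangle _ _ _
      rw [hek, hDb'] at t1; exact t1
    have hc4b : dist (y (2*B k+1)) (y (2*A k+1)) ≤ e k + D (2*A k+1) := by
      have t1 : dist (y (2*B k+1)) (y (2*A k+1)) ≤
          dist (y (2*B k+1)) (y (2*A k+2)) + dist (y (2*A k+2)) (y (2*A k+1)) :=
        dist_triangle _ _ _
      rw [dist_comm (y (2*B k+1)) (y (2*A k+2)), hek, hDa'] at t1
      linarith
    have h0a : 0 ≤ D (2*A k+1) := hDnon _
    have h0b : 0 ≤ D (2*B k) := hDnon _
    have h0e : 0 ≤ e k := dist_nonneg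
    refine max_le (max_le ?_ ?_) (max_le ?_ ?_)
    · linarith
    · rw [hDa']; linarith
    · rw [hDb']; linarith
    · linarith
  have hMten : Tendsto (fun k => e k + D (2*A k+1) + D (2*B k)) atTop (𝓝 ε) := by
    have := (he.add hDa).add hDb
    simpa using this
  have hfin : ε ≤ 0 := aux_squeeze hφusc hφlt hε.le ht0 ht1' ht2' hMten he
  linarith

/-- Corollary: the main common fixed point theorem with the control function `φ`
only assumed upper semicontinuous. -/
theorem common_fixed_point_three_maps_usc
    {X : Type*} [MetricSpace X] (K : Set X) (hK : K.Nonempty)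
    (T f g : X → X)
    (hT : Set.MapsTo T K K) (hf : Set.MapsTo f K K) (hg : Set.MapsTo g K K)
    (hsub : closure (T '' K) ⊆ f '' K ∩ g '' K)
    (φ : ℝ → ℝ)
    (hφusc : UpperSemicontinuousOn φ (Set.Ici 0))
    (hφnonneg : ∀ t ≥ (0 : ℝ), 0 ≤ φ t)
    (hφlt : ∀ t > (0 : ℝ), φ t < t)
    (hcontr : ∀ x ∈ K, ∀ y ∈ K,
      dist (T x) (T y) ≤ φ (min
        (max (max (dist (f x) (g y)) (dist (T x) (f x)))
          (max (dist (T y) (g y)) ((dist (T x) (g y) + dist (T y) (f x)) / 2)))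
        (max (max (dist (f y) (g x)) (dist (T x) (g x)))
          (max (dist (T y) (f y)) ((dist (T x) (f y) + dist (T y) (g x)) / 2)))))
    (hcomplete : IsComplete (closure (T '' K)) ∨ IsComplete (f '' K) ∨ IsComplete (g '' K))
    (hwcf : ∀ x ∈ K, T x = f x → T (f x) = f (T x))
    (hwcg : ∀ x ∈ K, T x = g x → T (g x) = g (T x)) :
    ∃! z, z ∈ K ∧ T z = z ∧ f z = z ∧ g z = z := by
  classical
  let M1 : X → X → ℝ := fun a b => max (max (dist (f a) (g b)) (dist (T a) (f a)))
        (max (dist (T b) (g b)) ((dist (T a) (g b) + dist (T b) (f a)) / 2))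
  let M2 : X → X → ℝ := fun a b => max (max (dist (f b) (g a)) (dist (T a) (g a)))
        (max (dist (T b) (f b)) ((dist (T a) (f b) + dist (T b) (g a)) / 2))
  let M : X → X → ℝ := fun a b => min (M1 a b) (M2 a b)
  have hM0 : ∀ a b, 0 ≤ M a b := fun a b =>
    le_min (le_max_of_le_left (le_max_of_le_left dist_nonneg))
      (le_max_of_le_left (le_max_of_le_left dist_nonneg))
  have hcontr' : ∀ a ∈ K, ∀ b ∈ K, dist (T a) (T b) ≤ min (φ (M a b)) (M a b) := by
    intro a ha b hb
    have hc : dist (T a) (T b) ≤ φ (M a b) := hcontr a ha b hb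
    rcases (hM0 a b).lt_or_eq with h | h
    · exact le_min hc (hc.trans (hφlt _ h).le)
    · have hmin0 : min (M1 a b) (M2 a b) = 0 := h.symm
      have hdist0 : dist (T a) (T b) ≤ 0 := by
        rcases le_total (M1 a b) (M2 a b) with hle | hle
        · have h1 : M1 a b = 0 := by rw [min_eq_left hle] at hmin0; exact hmin0
          have e1 : dist (f a) (g b) ≤ 0 :=
            (le_max_of_le_left (le_max_left _ _)).trans h1.le
          have e2 : dist (T a) (f a) ≤ 0 :=
            (le_max_of_le_left (le_max_right _ _)).trans h1.le
          have e3 : dist (T b) (g b) ≤ 0 :=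
            (le_max_of_le_right (le_max_left _ _)).trans h1.le
          have tri : dist (T a) (T b) ≤
              dist (T a) (f a) + dist (f a) (g b) + dist (g b) (T b) :=
            dist_triangle4 _ _ _ _
          rw [dist_comm (g b) (T b)] at tri
          linarith
        · have h1 : M2 a b = 0 := by rw [min_eq_right hle] at hmin0; exact hmin0
          have e1 : dist (f b) (g a) ≤ 0 :=
            (le_max_of_le_left (le_max_left _ _)).trans h1.le
          have e2 : dist (T a) (g a) ≤ 0 :=
            (le_max_of_le_left (le_max_right _ _)).trans h1.le
          have e3 : dist (T b) (f b) ≤ 0 :=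
            (le_max_of_le_right (le_max_left _ _)).trans h1.le
          have tri : dist (T a) (T b) ≤
              dist (T a) (g a) + dist (g a) (f b) + dist (f b) (T b) :=
            dist_triangle4 _ _ _ _
          rw [dist_comm (g a) (f b), dist_comm (f b) (T b)] at tri
          linarith
      rw [← h]
      exact le_min (hdist0.trans (hφnonneg 0 le_rfl)) hdist0
  -- construct the iteration sequence
  obtain ⟨x₀, hx₀K⟩ := hK
  have hTsub : ∀ a, a ∈ K → T a ∈ f '' K ∩ g '' K := fun a ha =>
    hsub (subset_closure ⟨a, ha, rfl⟩)
  have exF : ∀ a : K, ∃ b : K, f b = T a := by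
    intro a
    obtain ⟨b, hb, hbe⟩ := (hTsub a a.2).1
    exact ⟨⟨b, hb⟩, hbe⟩
  have exG : ∀ a : K, ∃ b : K, g b = T a := by
    intro a
    obtain ⟨b, hb, hbe⟩ := (hTsub a a.2).2
    exact ⟨⟨b, hb⟩, hbe⟩
  choose F hF using exF
  choose G hG using exG
  obtain ⟨x, hxK, hgx, hfx⟩ : ∃ x : ℕ → X, (∀ n, x n ∈ K) ∧
      (∀ j, g (x (2*j+1)) = T (x (2*j))) ∧ (∀ k, f (x (2*k+2)) = T (x (2*k+1))) := by
    let xx : ℕ → K := fun n =>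
      Nat.rec ⟨x₀, hx₀K⟩ (fun m xm => if m % 2 = 0 then G xm else F xm) n
    have hxx : ∀ n, xx (n+1) = if n % 2 = 0 then G (xx n) else F (xx n) := fun n => rfl
    refine ⟨fun n => (xx n).1, ?_, ?_, ?_⟩
    · intro n
      exact (xx n).2
    · intro j
      have h1 : xx (2*j+1) = G (xx (2*j)) := by
        rw [hxx (2*j), if_pos (by omega : (2*j) % 2 = 0)]
      show g (xx (2*j+1)).1 = T (xx (2*j)).1
      rw [h1]
      exact hG (xx (2*j))
    · intro k
      have heq : 2*k+2 = (2*k+1)+1 := by omega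
      have h1 : xx (2*k+2) = F (xx (2*k+1)) := by
        rw [heq, hxx (2*k+1), if_neg (by omega : ¬ (2*k+1) % 2 = 0)]
      show f (xx (2*k+2)).1 = T (xx (2*k+1)).1
      rw [h1]
      exact hF (xx (2*k+1))
  -- key contraction inequality along the sequence
  have hkey : ∀ k j, ∃ t, 0 ≤ t ∧
      dist (T (x (2*k+2))) (T (x (2*j+1))) ≤ min (φ t) t ∧
      t ≤ max (max (dist (T (x (2*k+1))) (T (x (2*j)))) (dist (T (x (2*k+2))) (T (x (2*k+1)))))
            (max (dist (T (x (2*j+1))) (T (x (2*j))))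
              ((dist (T (x (2*k+2))) (T (x (2*j))) + dist (T (x (2*j+1))) (T (x (2*k+1))))/2)) := by
    intro k j
    refine ⟨M (x (2*k+2)) (x (2*j+1)), hM0 _ _, hcontr' _ (hxK _) _ (hxK _), ?_⟩
    refine (min_le_left (M1 (x (2*k+2)) (x (2*j+1))) (M2 (x (2*k+2)) (x (2*j+1)))).trans ?_
    show max (max (dist (f (x (2*k+2))) (g (x (2*j+1)))) (dist (T (x (2*k+2))) (f (x (2*k+2)))))
        (max (dist (T (x (2*j+1))) (g (x (2*j+1))))
          ((dist (T (x (2*k+2))) (g (x (2*j+1))) + dist (T (x (2*j+1))) (f (x (2*k+2)))) / 2)) ≤ _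
    rw [hfx k, hgx j]
  -- D tends to 0
  have hstep : ∀ n, ∃ t, 0 ≤ t ∧
      dist (T (x (n+1))) (T (x (n+1+1))) ≤ min (φ t) t ∧
      t ≤ max (dist (T (x n)) (T (x (n+1)))) (dist (T (x (n+1))) (T (x (n+1+1)))) := by
    intro n
    obtain ⟨k, hk | hk⟩ := Nat.even_or_odd' n
    · subst hk
      obtain ⟨t, ht0, h1, h2⟩ := hkey k k
      refine ⟨t, ht0, by rwa [dist_comm] at h1, h2.trans ?_⟩
      have c1 : dist (T (x (2*k+1))) (T (x (2*k))) = dist (T (x (2*k))) (T (x (2*k+1))) :=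
        dist_comm _ _
      have c2 : dist (T (x (2*k+2))) (T (x (2*k+1))) = dist (T (x (2*k+1))) (T (x (2*k+2))) :=
        dist_comm _ _
      have tri : dist (T (x (2*k+2))) (T (x (2*k))) ≤
          dist (T (x (2*k+2))) (T (x (2*k+1))) + dist (T (x (2*k+1))) (T (x (2*k))) :=
        dist_triangle _ _ _
      have hm1 : dist (T (x (2*k))) (T (x (2*k+1))) ≤
          max (dist (T (x (2*k)))  (T (x (2*k+1)))) (dist (T (x (2*k+1))) (T (x (2*k+2)))) :=
        le_max_left _ _
      have hm2 : dist (T (x (2*k+1))) (T (x (2*k+2))) ≤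
          max (dist (T (x (2*k)))  (T (x (2*k+1)))) (dist (T (x (2*k+1))) (T (x (2*k+2)))) :=
        le_max_right _ _
      refine max_le (max_le ?_ ?_) (max_le ?_ ?_)
      · rw [c1]; exact hm1
      · rw [c2]; exact hm2
      · rw [c1]; exact hm1
      · rw [dist_self]
        linarith
    · subst hk
      obtain ⟨t, ht0, h1, h2⟩ := hkey k (k+1)
      have e2 : 2*(k+1)+1 = 2*k+3 := by omega
      have e1 : 2*(k+1) = 2*k+2 := by omega
      rw [e2, e1] at h2
      refine ⟨t, ht0, h1, ?_⟩
      have e3 : 2*k+1+1+1 = 2*k+3 := by omega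
      have e4 : 2*k+1+1 = 2*k+2 := by omega
      rw [show (2*k+1:ℕ)+1 = 2*k+2 from e4]
      rw [show (2*k+2:ℕ)+1 = 2*k+3 from by omega]
      refine h2.trans ?_
      have c2 : dist (T (x (2*k+2))) (T (x (2*k+1))) = dist (T (x (2*k+1))) (T (x (2*k+2))) :=
        dist_comm _ _
      have c3 : dist (T (x (2*k+3))) (T (x (2*k+2))) = dist (T (x (2*k+2))) (T (x (2*k+3))) :=
        dist_comm _ _
      have tri : dist (T (x (2*k+3))) (T (x (2*k+1))) ≤
          dist (T (x (2*k+3))) (T (x (2*k+2))) + dist (T (x (2*k+2))) (T (x (2*k+1))) :=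
        dist_triangle _ _ _
      have hm1 : dist (T (x (2*k+1))) (T (x (2*k+2))) ≤
          max (dist (T (x (2*k+1))) (T (x (2*k+2)))) (dist (T (x (2*k+2))) (T (x (2*k+3)))) :=
        le_max_left _ _
      have hm2 : dist (T (x (2*k+2))) (T (x (2*k+3))) ≤
          max (dist (T (x (2*k+1))) (T (x (2*k+2)))) (dist (T (x (2*k+2))) (T (x (2*k+3)))) :=
        le_max_right _ _
      refine max_le (max_le ?_ ?_) (max_le ?_ ?_)
      · exact hm1
      · rw [c2]; exact hm1
      · rw [c3]; exact hm2
      · rw [dist_self]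
        linarith
  have hDnnn : ∀ n : ℕ, (0:ℝ) ≤ dist (T (x n)) (T (x (n+1))) := fun n => dist_nonneg
  have hD0 : Tendsto (fun n => dist (T (x n)) (T (x (n+1)))) atTop (𝓝 0) :=
    aux_D0 hφusc hφlt hDnnn hstep
  have hcauchy : CauchySeq (fun n => T (x n)) :=
    aux_cauchy hφusc hφlt hD0 hkey
  -- limit point
  have hmemT : ∀ n, T (x n) ∈ T '' K := fun n => ⟨x n, hxK n, rfl⟩
  obtain ⟨z, hyz⟩ : ∃ z, Tendsto (fun n => T (x n)) atTop (𝓝 z) := by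
    rcases hcomplete with hc | hc | hc
    · obtain ⟨z, -, hz⟩ := cauchySeq_tendsto_of_isComplete hc
        (fun n => subset_closure (hmemT n)) hcauchy
      exact ⟨z, hz⟩
    · obtain ⟨z, -, hz⟩ := cauchySeq_tendsto_of_isComplete hc
        (fun n => (hsub (subset_closure (hmemT n))).1) hcauchy
      exact ⟨z, hz⟩
    · obtain ⟨z, -, hz⟩ := cauchySeq_tendsto_of_isComplete hc
        (fun n => (hsub (subset_closure (hmemT n))).2) hcauchy
      exact ⟨z, hz⟩
  have hzcl : z ∈ closure (T '' K) :=
    mem_closure_of_tendsto hyz (Filter.Eventually.of_forall hmemT)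
  obtain ⟨⟨u, huK, hfu⟩, ⟨v, hvK, hgv⟩⟩ := hsub hzcl
  have hyσ : ∀ σ : ℕ → ℕ, (∀ k, k ≤ σ k) → Tendsto (fun k => T (x (σ k))) atTop (𝓝 z) :=
    fun σ hσ => hyz.comp (tendsto_atTop_mono hσ tendsto_id)
  have hy1 : Tendsto (fun k => T (x (2*k+1))) atTop (𝓝 z) :=
    hyσ (fun k => 2*k+1) (fun k => by show k ≤ 2*k+1; omega)
  have hy2 : Tendsto (fun k => T (x (2*k+2))) atTop (𝓝 z) :=
    hyσ (fun k => 2*k+2) (fun k => by show k ≤ 2*k+2; omega)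
  have hy0 : Tendsto (fun k => T (x (2*k))) atTop (𝓝 z) :=
    hyσ (fun k => 2*k) (fun k => by show k ≤ 2*k; omega)
  -- T v = z
  have hTv : T v = z := by
    have hd : Tendsto (fun k => dist (T (x (2*k+2))) (T v)) atTop (𝓝 (dist (T v) z)) := by
      have h := hy2.dist (tendsto_const_nhds : Tendsto (fun _ : ℕ => T v) atTop (𝓝 (T v)))
      rwa [dist_comm z (T v)] at h
    have hbnd : ∀ k, M (x (2*k+2)) v ≤
        max (max (dist (T (x (2*k+1))) z) (dist (T (x (2*k+2))) (T (x (2*k+1)))))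
          (max (dist (T v) z) ((dist (T (x (2*k+2))) z + dist (T v) (T (x (2*k+1))))/2)) := by
      intro k
      refine (min_le_left (M1 (x (2*k+2)) v) (M2 (x (2*k+2)) v)).trans ?_
      show max (max (dist (f (x (2*k+2))) (g v)) (dist (T (x (2*k+2))) (f (x (2*k+2)))))
          (max (dist (T v) (g v)) ((dist (T (x (2*k+2))) (g v) + dist (T v) (f (x (2*k+2)))) / 2)) ≤ _
      rw [hfx k, hgv]
    have hMten : Tendsto (fun k =>
        max (max (dist (T (x (2*k+1))) z) (dist (T (x (2*k+2))) (T (x (2*k+1)))))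
          (max (dist (T v) z) ((dist (T (x (2*k+2))) z + dist (T v) (T (x (2*k+1))))/2)))
        atTop (𝓝 (dist (T v) z)) := by
      have l1 : Tendsto (fun k => dist (T (x (2*k+1))) z) atTop (𝓝 0) := by
        have h := hy1.dist (tendsto_const_nhds : Tendsto (fun _ : ℕ => z) atTop (𝓝 z))
        rwa [dist_self] at h
      have l2 : Tendsto (fun k => dist (T (x (2*k+2))) (T (x (2*k+1)))) atTop (𝓝 0) := by
        have h := hy2.dist hy1
        rwa [dist_self] at h
      have l3 : Tendsto (fun k => dist (T (x (2*k+2))) z) atTop (𝓝 0) := by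
        have h := hy2.dist (tendsto_const_nhds : Tendsto (fun _ : ℕ => z) atTop (𝓝 z))
        rwa [dist_self] at h
      have l4 : Tendsto (fun k => dist (T v) (T (x (2*k+1)))) atTop (𝓝 (dist (T v) z)) :=
        (tendsto_const_nhds : Tendsto (fun _ : ℕ => T v) atTop (𝓝 (T v))).dist hy1
      have h := (l1.max l2).max ((tendsto_const_nhds :
          Tendsto (fun _ : ℕ => dist (T v) z) atTop (𝓝 (dist (T v) z))).max
          ((l3.add l4).div_const 2))
      have hval : max (max (0:ℝ) 0) (max (dist (T v) z) ((0 + dist (T v) z)/2))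
          = dist (T v) z := by
        rw [max_self, zero_add,
          max_eq_left (by linarith [dist_nonneg (x := T v) (y := z)] :
            dist (T v) z / 2 ≤ dist (T v) z),
          max_eq_right (dist_nonneg : (0:ℝ) ≤ dist (T v) z)]
      rwa [hval] at h
    have hfin : dist (T v) z ≤ 0 := aux_squeeze hφusc hφlt
      (dist_nonneg : (0:ℝ) ≤ dist (T v) z)
      (fun k => hM0 (x (2*k+2)) v)
      (fun k => hcontr' _ (hxK _) v hvK) hbnd hMten hd
    exact dist_le_zero.mp hfin
  -- T u = z
  have hTu : T u = z := by
    have hd : Tendsto (fun k => dist (T u) (T (x (2*k+1)))) atTop (𝓝 (dist (T u) z)) :=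
      (tendsto_const_nhds : Tendsto (fun _ : ℕ => T u) atTop (𝓝 (T u))).dist hy1
    have hbnd : ∀ k, M u (x (2*k+1)) ≤
        max (max (dist z (T (x (2*k)))) (dist (T u) z))
          (max (dist (T (x (2*k+1))) (T (x (2*k))))
            ((dist (T u) (T (x (2*k))) + dist (T (x (2*k+1))) z)/2)) := by
      intro k
      refine (min_le_left (M1 u (x (2*k+1))) (M2 u (x (2*k+1)))).trans ?_
      show max (max (dist (f u) (g (x (2*k+1)))) (dist (T u) (f u)))
          (max (dist (T (x (2*k+1))) (g (x (2*k+1))))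
            ((dist (T u) (g (x (2*k+1))) + dist (T (x (2*k+1))) (f u)) / 2)) ≤ _
      rw [hfu, hgx k]
    have hMten : Tendsto (fun k =>
        max (max (dist z (T (x (2*k)))) (dist (T u) z))
          (max (dist (T (x (2*k+1))) (T (x (2*k))))
            ((dist (T u) (T (x (2*k))) + dist (T (x (2*k+1))) z)/2)))
        atTop (𝓝 (dist (T u) z)) := by
      have l1 : Tendsto (fun k => dist z (T (x (2*k)))) atTop (𝓝 0) := by
        have h := (tendsto_const_nhds : Tendsto (fun _ : ℕ => z) atTop (𝓝 z)).dist hy0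
        rwa [dist_self] at h
      have l3 : Tendsto (fun k => dist (T (x (2*k+1))) (T (x (2*k)))) atTop (𝓝 0) := by
        have h := hy1.dist hy0
        rwa [dist_self] at h
      have l4 : Tendsto (fun k => dist (T u) (T (x (2*k)))) atTop (𝓝 (dist (T u) z)) :=
        (tendsto_const_nhds : Tendsto (fun _ : ℕ => T u) atTop (𝓝 (T u))).dist hy0
      have l5 : Tendsto (fun k => dist (T (x (2*k+1))) z) atTop (𝓝 0) := by
        have h := hy1.dist (tendsto_const_nhds : Tendsto (fun _ : ℕ => z) atTop (𝓝 z))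
        rwa [dist_self] at h
      have h := (l1.max (tendsto_const_nhds :
          Tendsto (fun _ : ℕ => dist (T u) z) atTop (𝓝 (dist (T u) z)))).max
          (l3.max ((l4.add l5).div_const 2))
      have hval : max (max (0:ℝ) (dist (T u) z)) (max 0 ((dist (T u) z + 0)/2))
          = dist (T u) z := by
        rw [add_zero,
          max_eq_right (by positivity : (0:ℝ) ≤ dist (T u) z / 2),
          max_eq_right (dist_nonneg : (0:ℝ) ≤ dist (T u) z),
          max_eq_left (by linarith [dist_nonneg (x := T u) (y := z)] :
            dist (T u) z / 2 ≤ dist (T u) z)]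
      rwa [hval] at h
    have hfin : dist (T u) z ≤ 0 := aux_squeeze hφusc hφlt
      (dist_nonneg : (0:ℝ) ≤ dist (T u) z)
      (fun k => hM0 u (x (2*k+1)))
      (fun k => hcontr' u huK _ (hxK _)) hbnd hMten hd
    exact dist_le_zero.mp hfin
  -- weak compatibility
  have hzK : z ∈ K := hfu ▸ hf huK
  have hTfz : T z = f z := by
    have h := hwcf u huK (hTu.trans hfu.symm)
    rwa [hfu, hTu] at h
  have hTgz : T z = g z := by
    have h := hwcg v hvK (hTv.trans hgv.symm)
    rwa [hgv, hTv] at h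
  have hTz : T z = z := by
    have hc := hcontr' z hzK v hvK
    rw [hTv] at hc
    have hb : M z v ≤ dist (T z) z := by
      refine (min_le_left (M1 z v) (M2 z v)).trans ?_
      show max (max (dist (f z) (g v)) (dist (T z) (f z)))
          (max (dist (T v) (g v)) ((dist (T z) (g v) + dist (T v) (f z)) / 2)) ≤ dist (T z) z
      rw [← hTfz, hgv, hTv]
      simp only [dist_self]
      rw [dist_comm z (T z)]
      exact max_le (max_le le_rfl dist_nonneg) (max_le dist_nonneg (by linarith))
    have hfin := aux_hps hφlt (hM0 z v) hc hb
    exact dist_le_zero.mp hfin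
  have hfz : f z = z := hTfz.symm.trans hTz
  have hgz : g z = z := hTgz.symm.trans hTz
  refine ⟨z, ⟨hzK, hTz, hfz, hgz⟩, ?_⟩
  rintro w ⟨hwK, hTw, hfw, hgw⟩
  have hc := hcontr' w hwK z hzK
  rw [hTw, hTz] at hc
  have hb : M w z ≤ dist w z := by
    refine (min_le_left (M1 w z) (M2 w z)).trans ?_
    show max (max (dist (f w) (g z)) (dist (T w) (f w)))
        (max (dist (T z) (g z)) ((dist (T w) (g z) + dist (T z) (f w)) / 2)) ≤ dist w z
    rw [hfw, hgz, hTw, hTz]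
    simp only [dist_self]
    rw [dist_comm z w]
    exact max_le (max_le le_rfl dist_nonneg) (max_le dist_nonneg (by linarith))
  have hfin := aux_hps hφlt (hM0 w z) hc hb
  exact dist_le_zero.mp hfin
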